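/- If u ∈ H¹(0,1) with u(0)=0, and a,d as above with K₁+K₂ ≤ 2 (equality allowed), then lim_{x→0⁺} x² u(x)²/(a(x)d(x)) = 0. -/
import Mathlib


open Set MeasureTheory Filter

/-- if `u ∈ H¹(0,1)` with `u 0 = 0`, and `a, d` are continuous,
vanish at `0`, positive on `(0,1]`, with `x ↦ x^K₁/a x` and `x ↦ x^K₂/d x`
nondecreasing near `0` and `K₁ + K₂ ≤ 2` (equality allowed), then
`lim_{x→0⁺} x² * u(x)² / (a(x) d(x)) = 0`. -/
theorem statement7 (a d u u' : ℝ → ℝ) (K₁ K₂ : ℝ)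
    (ha_cont : ContinuousOn a (Icc 0 1)) (hd_cont : ContinuousOn d (Icc 0 1))
    (ha0 : a 0 = 0) (hd0 : d 0 = 0)
    (ha_pos : ∀ x ∈ Ioc (0:ℝ) 1, 0 < a x)
    (hd_pos : ∀ x ∈ Ioc (0:ℝ) 1, 0 < d x)
    (hK₁ : K₁ ∈ Ioo (0:ℝ) 2) (hK₂ : K₂ ∈ Ioo (0:ℝ) 2)
    (hsum : K₁ + K₂ ≤ 2)
    (hmona : ∃ δ > 0, MonotoneOn (fun x : ℝ => x ^ K₁ / a x) (Ioo (0:ℝ) δ))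
    (hmond : ∃ δ > 0, MonotoneOn (fun x : ℝ => x ^ K₂ / d x) (Ioo (0:ℝ) δ))
    (hu : ∀ x ∈ Ioo (0:ℝ) 1, HasDerivAt u (u' x) x)
    (hu_cont : ContinuousOn u (Icc 0 1))
    (hu0 : u 0 = 0)
    (hu' : IntegrableOn (fun x => u' x ^ 2) (Ioo 0 1)) :
    Tendsto (fun x : ℝ => x ^ 2 * u x ^ 2 / (a x * d x))
      (nhdsWithin 0 (Ioi 0)) (nhds 0) := by
  obtain ⟨δ₁, hδ₁, hma⟩ := hmona
  obtain ⟨δ₂, hδ₂, hmd⟩ := hmond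
  set x₀ : ℝ := min (min δ₁ δ₂ / 2) 1 with hx₀def
  have hx₀_pos : 0 < x₀ := by positivity
  have hx₀_le1 : x₀ ≤ 1 := min_le_right _ _
  have hx₀_lt_δ₁ : x₀ < δ₁ := by
    have : x₀ ≤ min δ₁ δ₂ / 2 := min_le_left _ _
    have h2 : min δ₁ δ₂ / 2 < min δ₁ δ₂ := by
      have : (0:ℝ) < min δ₁ δ₂ := lt_min hδ₁ hδ₂
      linarith
    exact lt_of_le_of_lt this (lt_of_lt_of_le h2 (min_le_left _ _))
  have hx₀_lt_δ₂ : x₀ < δ₂ := by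
    have : x₀ ≤ min δ₁ δ₂ / 2 := min_le_left _ _
    have h2 : min δ₁ δ₂ / 2 < min δ₁ δ₂ := by
      have : (0:ℝ) < min δ₁ δ₂ := lt_min hδ₁ hδ₂
      linarith
    exact lt_of_le_of_lt this (lt_of_lt_of_le h2 (min_le_right _ _))
  have hax₀ : 0 < a x₀ := ha_pos x₀ ⟨hx₀_pos, hx₀_le1⟩
  have hdx₀ : 0 < d x₀ := hd_pos x₀ ⟨hx₀_pos, hx₀_le1⟩
  set C₁ : ℝ := x₀ ^ K₁ / a x₀ with hC₁
  set C₂ : ℝ := x₀ ^ K₂ / d x₀ with hC₂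
  have hC₁_nonneg : 0 ≤ C₁ := by
    apply div_nonneg (Real.rpow_nonneg hx₀_pos.le _) hax₀.le
  have hC₂_nonneg : 0 ≤ C₂ := by
    apply div_nonneg (Real.rpow_nonneg hx₀_pos.le _) hdx₀.le
  -- the dominating function
  have hu_tendsto : Tendsto u (nhdsWithin 0 (Ioi 0)) (nhds 0) := by
    have h1 : Tendsto u (nhdsWithin 0 (Icc 0 1)) (nhds (u 0)) :=
      (hu_cont 0 ⟨le_refl 0, zero_le_one⟩)
    rw [hu0] at h1
    have h2 : Tendsto u (nhdsWithin 0 (Ioc 0 1)) (nhds 0) :=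
      h1.mono_left (nhdsWithin_mono _ Ioc_subset_Icc_self)
    rwa [nhdsWithin_Ioc_eq_nhdsGT (zero_lt_one)] at h2
  have hdom : Tendsto (fun x : ℝ => C₁ * C₂ * u x ^ 2)
      (nhdsWithin 0 (Ioi 0)) (nhds 0) := by
    have := ((hu_tendsto.pow 2).const_mul (C₁ * C₂))
    simpa using this
  apply squeeze_zero' ?_ ?_ hdom
  · filter_upwards [Ioc_mem_nhdsGT_of_mem ⟨le_refl (0:ℝ), hx₀_pos⟩] with x hx
    obtain ⟨hx0, hxx₀⟩ := hx
    have hx1 : x ≤ 1 := le_trans hxx₀ hx₀_le1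
    have ha := ha_pos x ⟨hx0, hx1⟩
    have hd := hd_pos x ⟨hx0, hx1⟩
    positivity
  · filter_upwards [Ioc_mem_nhdsGT_of_mem ⟨le_refl (0:ℝ), hx₀_pos⟩] with x hx
    obtain ⟨hx0, hxx₀⟩ := hx
    have hx1 : x ≤ 1 := le_trans hxx₀ hx₀_le1
    have ha := ha_pos x ⟨hx0, hx1⟩
    have hd := hd_pos x ⟨hx0, hx1⟩
    have hmemx1 : x ∈ Ioo (0:ℝ) δ₁ := ⟨hx0, lt_of_le_of_lt hxx₀ hx₀_lt_δ₁⟩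
    have hmemx01 : x₀ ∈ Ioo (0:ℝ) δ₁ := ⟨hx₀_pos, hx₀_lt_δ₁⟩
    have hmemx2 : x ∈ Ioo (0:ℝ) δ₂ := ⟨hx0, lt_of_le_of_lt hxx₀ hx₀_lt_δ₂⟩
    have hmemx02 : x₀ ∈ Ioo (0:ℝ) δ₂ := ⟨hx₀_pos, hx₀_lt_δ₂⟩
    have hA : x ^ K₁ / a x ≤ C₁ := hma hmemx1 hmemx01 hxx₀
    have hB : x ^ K₂ / d x ≤ C₂ := hmd hmemx2 hmemx02 hxx₀
    have hT : x ^ (2 - (K₁ + K₂)) ≤ 1 :=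
      Real.rpow_le_one hx0.le hx1 (by linarith)
    have hTnn : 0 ≤ x ^ (2 - (K₁ + K₂)) := Real.rpow_nonneg hx0.le _
    have hAnn : 0 ≤ x ^ K₁ / a x := div_nonneg (Real.rpow_nonneg hx0.le _) ha.le
    have hBnn : 0 ≤ x ^ K₂ / d x := div_nonneg (Real.rpow_nonneg hx0.le _) hd.le
    have hsplit : x ^ 2 * u x ^ 2 / (a x * d x)
        = u x ^ 2 * (x ^ (2 - (K₁ + K₂)) * ((x ^ K₁ / a x) * (x ^ K₂ / d x))) := by
      have h2 : (x : ℝ) ^ (2:ℕ) = x ^ ((2:ℝ)) := by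
        rw [← Real.rpow_natCast x 2]; norm_num
      have hx2 : x ^ ((2:ℝ)) = x ^ (2 - (K₁ + K₂)) * (x ^ K₁ * x ^ K₂) := by
        rw [← Real.rpow_add hx0, ← Real.rpow_add hx0]; ring_nf
      field_simp
      rw [h2, hx2]; ring
    rw [hsplit]
    have hstep : x ^ (2 - (K₁ + K₂)) * ((x ^ K₁ / a x) * (x ^ K₂ / d x))
        ≤ 1 * (C₁ * C₂) :=
      mul_le_mul hT (mul_le_mul hA hB hBnn hC₁_nonneg)
        (mul_nonneg hAnn hBnn) zero_le_one
    calc u x ^ 2 * (x ^ (2 - (K₁ + K₂)) * ((x ^ K₁ / a x) * (x ^ K₂ / d x)))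
        ≤ u x ^ 2 * (1 * (C₁ * C₂)) :=
          mul_le_mul_of_nonneg_left hstep (sq_nonneg _)
      _ = C₁ * C₂ * u x ^ 2 := by ring
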